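/- arXiv:1507.01160 — 5 statements merged into one kernel-verified Lean document; each statement's English description precedes it below -/
import Mathlib

section
/- For a standard normal random variable z and any w ≥ 0, P(z ≥ w) ≤ 2·exp(−w²/2) / (√(2π)·(w + √(w² + 8/π))). -/
open Real MeasureTheory Set

noncomputable def gF (w : ℝ) : ℝ := π/4 * (Real.sqrt (w^2 + 8/π) - w)
noncomputable def gC : ℝ := ∫ x in Ioi (0:ℝ), Real.exp (-x^2/2)
noncomputable def gG (w : ℝ) : ℝ :=
  Real.exp (-w^2/2) * gF w - gC + ∫ t in (0:ℝ)..w, Real.exp (-t^2/2)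

lemma gauss_cont : Continuous fun x : ℝ => Real.exp (-x^2/2) := by fun_prop

lemma gauss_integrable : Integrable (fun x : ℝ => Real.exp (-x^2/2)) := by
  have h := integrable_exp_neg_mul_sq (by norm_num : (0:ℝ) < 1/2)
  have e : (fun x : ℝ => Real.exp (-(1/2)*x^2)) = fun x => Real.exp (-x^2/2) := by
    funext x; congr 1; ring
  rwa [e] at h

lemma hs_pos (w : ℝ) : 0 < Real.sqrt (w^2 + 8/π) := by
  apply Real.sqrt_pos.2
  positivity

lemma gF_hasDeriv (w : ℝ) :
    HasDerivAt gF (π/4 * (w / Real.sqrt (w^2 + 8/π) - 1)) w := by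
  have hne : w^2 + 8/π ≠ 0 := by positivity
  have h1 : HasDerivAt (fun w : ℝ => w^2 + 8/π) (2*w) w := by
    simpa using (hasDerivAt_pow 2 w).add_const (8/π)
  have h2 : HasDerivAt (fun w : ℝ => Real.sqrt (w^2 + 8/π))
      (1 / (2 * Real.sqrt (w^2 + 8/π)) * (2*w)) w :=
    (Real.hasDerivAt_sqrt hne).comp w h1
  have h3 := ((h2.sub (hasDerivAt_id w)).const_mul (π/4))
  refine h3.congr_deriv ?_
  have := (hs_pos w).ne'
  field_simp

noncomputable def gphi (w : ℝ) : ℝ :=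
  1 - π/4 * (w * Real.sqrt (w^2 + 8/π) - w^2 - w / Real.sqrt (w^2 + 8/π) + 1)

lemma gG_hasDeriv (w : ℝ) :
    HasDerivAt gG (Real.exp (-w^2/2) * gphi w) w := by
  have hexp : HasDerivAt (fun w : ℝ => Real.exp (-w^2/2))
      (Real.exp (-w^2/2) * (-w)) w := by
    have h1 : HasDerivAt (fun w : ℝ => -w^2/2) (-w) w := by
      have := ((hasDerivAt_pow 2 w).neg.div_const 2)
      refine this.congr_deriv ?_; simp; ring
    simpa [mul_comm] using h1.exp
  have hint : HasDerivAt (fun u : ℝ => ∫ t in (0:ℝ)..u, Real.exp (-t^2/2))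
      (Real.exp (-w^2/2)) w := by
    refine intervalIntegral.integral_hasDerivAt_right
      (gauss_cont.intervalIntegrable _ _) ?_ gauss_cont.continuousAt
    exact gauss_cont.stronglyMeasurable.stronglyMeasurableAtFilter
  have h := ((hexp.mul (gF_hasDeriv w)).sub_const gC).add hint
  refine h.congr_deriv ?_
  unfold gphi gF
  ring

lemma gphi_nonneg {w : ℝ} (hw : 0 ≤ w)
    (h : w^2 * (1 - 2/π) ≤ (4/π - 1)^2) : 0 ≤ gphi w := by
  have hπ4 : π < 4 := by linarith [Real.pi_lt_d2]
  have hπ2 : 2 < π := by linarith [Real.pi_gt_three]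
  have hπ : 0 < π := Real.pi_pos
  set s := Real.sqrt (w^2 + 8/π) with hs_def
  have hs : 0 < s := hs_pos w
  have hs2 : s * s = w^2 + 8/π := Real.mul_self_sqrt (by positivity)
  -- key inequality
  have hb : (0:ℝ) < 8/π - 1 := by
    rw [sub_pos, lt_div_iff₀ hπ]; linarith
  have hc : (0:ℝ) < 4/π - 1 := by
    rw [sub_pos, lt_div_iff₀ hπ]; linarith
  have key : w^3 + (8/π - 1) * w ≤ s * (w^2 + (4/π - 1)) := by
    have hL : 0 ≤ w^3 + (8/π - 1) * w := by positivity
    have hR : 0 ≤ s * (w^2 + (4/π - 1)) := by positivity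
    have hsq : (w^3 + (8/π - 1) * w)^2 ≤ (s * (w^2 + (4/π - 1)))^2 := by
      have hident : (s * (w^2 + (4/π - 1)))^2 - (w^3 + (8/π - 1) * w)^2
          = (8/π) * ((4/π - 1)^2 - w^2 * (1 - 2/π)) := by
        have : s^2 = w^2 + 8/π := by rw [sq]; exact hs2
        rw [mul_pow, this]; ring
      nlinarith [hident]
    nlinarith [hsq, hL, hR]
  -- conclude
  have hid : (1 - π/4 * (w * s - w^2 - w / s + 1)) * s
      = π/4 * (s*(w^2+(4/π-1)) - (w^3+(8/π-1)*w)) := by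
    have hpp : π * π⁻¹ = 1 := mul_inv_cancel₀ hπ.ne'
    field_simp
    linear_combination (-(π*w)) * hs2 - (8*w) * hpp
  unfold gphi
  rw [← hs_def]
  nlinarith [hid, key, hs]

lemma gphi_nonpos {w : ℝ} (hw : 0 ≤ w)
    (h : (4/π - 1)^2 ≤ w^2 * (1 - 2/π)) : gphi w ≤ 0 := by
  have hπ4 : π < 4 := by linarith [Real.pi_lt_d2]
  have hπ2 : 2 < π := by linarith [Real.pi_gt_three]
  have hπ : 0 < π := Real.pi_pos
  set s := Real.sqrt (w^2 + 8/π) with hs_def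
  have hs : 0 < s := hs_pos w
  have hs2 : s * s = w^2 + 8/π := Real.mul_self_sqrt (by positivity)
  have hb : (0:ℝ) < 8/π - 1 := by
    rw [sub_pos, lt_div_iff₀ hπ]; linarith
  have hc : (0:ℝ) < 4/π - 1 := by
    rw [sub_pos, lt_div_iff₀ hπ]; linarith
  have key : s * (w^2 + (4/π - 1)) ≤ w^3 + (8/π - 1) * w := by
    have hL : 0 ≤ w^3 + (8/π - 1) * w := by positivity
    have hR : 0 ≤ s * (w^2 + (4/π - 1)) := by positivity
    have hsq : (s * (w^2 + (4/π - 1)))^2 ≤ (w^3 + (8/π - 1) * w)^2 := by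
      have hident : (s * (w^2 + (4/π - 1)))^2 - (w^3 + (8/π - 1) * w)^2
          = (8/π) * ((4/π - 1)^2 - w^2 * (1 - 2/π)) := by
        have : s^2 = w^2 + 8/π := by rw [sq]; exact hs2
        rw [mul_pow, this]; ring
      nlinarith [hident]
    nlinarith [hsq, hL, hR]
  have hid : (1 - π/4 * (w * s - w^2 - w / s + 1)) * s
      = π/4 * (s*(w^2+(4/π-1)) - (w^3+(8/π-1)*w)) := by
    have hpp : π * π⁻¹ = 1 := mul_inv_cancel₀ hπ.ne'
    field_simp
    linear_combination (-(π*w)) * hs2 - (8*w) * hpp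
  unfold gphi
  rw [← hs_def]
  nlinarith [hid, key, hs]

lemma gG_zero : gG 0 = 0 := by
  have hπ : 0 < π := Real.pi_pos
  have hC : gC = Real.sqrt (2*π) / 2 := by
    unfold gC
    have e : (fun x : ℝ => Real.exp (-x^2/2)) = fun x => Real.exp (-(1/2)*x^2) := by
      funext x; congr 1; ring
    rw [e, integral_gaussian_Ioi]
    rw [show π / (1/2 : ℝ) = 2 * π by ring]
  have hF0 : gF 0 = Real.sqrt (2*π) / 2 := by
    unfold gF
    have h8 : (0:ℝ)^2 + 8/π = (2/π)^2 * (2*π) := by field_simp; ring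
    rw [h8, Real.sqrt_mul (sq_nonneg _), Real.sqrt_sq (by positivity : (0:ℝ) ≤ 2/π)]
    field_simp
    ring
  unfold gG
  rw [hC, hF0]
  norm_num

lemma gF_nonneg (w : ℝ) (hw : 0 ≤ w) : 0 ≤ gF w := by
  have hπ : 0 < π := Real.pi_pos
  unfold gF
  have : w ≤ Real.sqrt (w^2 + 8/π) := by
    have h := Real.sqrt_le_sqrt (show w^2 ≤ w^2 + 8/π from le_add_of_nonneg_right (by positivity : (0:ℝ) ≤ 8/π))
    rwa [Real.sqrt_sq hw] at h
  nlinarith [this]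

lemma gF_bound (w : ℝ) (hw : 0 ≤ w) : gF w ≤ π/4 * Real.sqrt (8/π) := by
  have hπ : 0 < π := Real.pi_pos
  unfold gF
  have h1 : Real.sqrt (w^2 + 8/π) - w ≤ Real.sqrt (8/π) := by
    have h2 : Real.sqrt (w^2 + 8/π) ≤ w + Real.sqrt (8/π) := by
      rw [show w + Real.sqrt (8/π) = Real.sqrt ((w + Real.sqrt (8/π))^2) by
        rw [Real.sqrt_sq (by positivity)]]
      apply Real.sqrt_le_sqrt
      nlinarith [Real.sq_sqrt (by positivity : (0:ℝ) ≤ 8/π),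
        mul_nonneg hw (Real.sqrt_nonneg (8/π))]
    linarith
  nlinarith [h1]

lemma gG_tendsto : Filter.Tendsto gG Filter.atTop (nhds 0) := by
  have h1 : Filter.Tendsto (fun b : ℝ => Real.exp (-b^2/2) * gF b)
      Filter.atTop (nhds 0) := by
    have hexp : Filter.Tendsto (fun b : ℝ => Real.exp (-b^2/2))
        Filter.atTop (nhds 0) := by
      apply Real.tendsto_exp_atBot.comp
      apply Filter.Tendsto.atBot_div_const (by norm_num : (0:ℝ) < 2)
      exact Filter.tendsto_neg_atTop_atBot.comp
        (Filter.tendsto_pow_atTop (by norm_num : 2 ≠ 0))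
    apply squeeze_zero' (g := fun b => Real.exp (-b^2/2) * (π/4 * Real.sqrt (8/π)))
    · filter_upwards [Filter.eventually_ge_atTop (0:ℝ)] with b hb
      exact mul_nonneg (Real.exp_nonneg _) (gF_nonneg b hb)
    · filter_upwards [Filter.eventually_ge_atTop (0:ℝ)] with b hb
      exact mul_le_mul_of_nonneg_left (gF_bound b hb) (Real.exp_nonneg _)
    · simpa using hexp.mul_const (π/4 * Real.sqrt (8/π))
  have h2 : Filter.Tendsto (fun b : ℝ => ∫ t in (0:ℝ)..b, Real.exp (-t^2/2))
      Filter.atTop (nhds gC) :=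
    intervalIntegral_tendsto_integral_Ioi 0 gauss_integrable.integrableOn Filter.tendsto_id
  have := (h1.sub_const gC).add h2
  simpa using (show Filter.Tendsto gG Filter.atTop (nhds (0 - gC + gC)) from this)

lemma gG_nonneg (w : ℝ) (hw : 0 ≤ w) : 0 ≤ gG w := by
  have hπ : 0 < π := Real.pi_pos
  have hπ2 : 2 < π := by linarith [Real.pi_gt_three]
  set w0 : ℝ := Real.sqrt ((4/π - 1)^2 / (1 - 2/π)) with hw0
  have hden : (0:ℝ) < 1 - 2/π := by
    rw [sub_pos, div_lt_one hπ]; linarith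
  have hw0sq : w0^2 = (4/π - 1)^2 / (1 - 2/π) :=
    Real.sq_sqrt (by positivity)
  have hw0nn : 0 ≤ w0 := Real.sqrt_nonneg _
  rcases le_total w w0 with hcase | hcase
  · -- G monotone on [0, w0]
    have hmono : MonotoneOn gG (Set.Icc 0 w0) := by
      apply monotoneOn_of_deriv_nonneg (convex_Icc 0 w0)
      · exact fun x _ => ((gG_hasDeriv x).differentiableAt.continuousAt.continuousWithinAt)
      · exact fun x _ => ((gG_hasDeriv x).differentiableAt.differentiableWithinAt)
      · intro x hx
        rw [interior_Icc] at hx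
        rw [(gG_hasDeriv x).deriv]
        apply mul_nonneg (Real.exp_nonneg _)
        apply gphi_nonneg hx.1.le
        have : x^2 ≤ w0^2 := by nlinarith [hx.1.le, hx.2.le, hw0nn]
        rw [hw0sq] at this
        calc x^2 * (1 - 2/π) ≤ (4/π-1)^2 / (1 - 2/π) * (1 - 2/π) :=
              mul_le_mul_of_nonneg_right this hden.le
          _ = (4/π-1)^2 := div_mul_cancel₀ _ hden.ne'
    have := hmono (Set.mem_Icc.2 ⟨le_rfl, hw0nn⟩) (Set.mem_Icc.2 ⟨hw, hcase⟩) hw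
    rwa [gG_zero] at this
  · -- G antitone on [w0, ∞), G(b) → 0
    have key : ∀ b, w ≤ b → gG b ≤ gG w := by
      intro b hb
      have hanti : AntitoneOn gG (Set.Icc w0 b) := by
        apply antitoneOn_of_deriv_nonpos (convex_Icc w0 b)
        · exact fun x _ => ((gG_hasDeriv x).differentiableAt.continuousAt.continuousWithinAt)
        · exact fun x _ => ((gG_hasDeriv x).differentiableAt.differentiableWithinAt)
        · intro x hx
          rw [interior_Icc] at hx
          rw [(gG_hasDeriv x).deriv]
          have hx0 : 0 ≤ x := le_trans hw0nn hx.1.le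
          apply mul_nonpos_of_nonneg_of_nonpos (Real.exp_nonneg _)
          apply gphi_nonpos hx0
          have : w0^2 ≤ x^2 := by nlinarith [hx.1.le, hw0nn]
          rw [hw0sq] at this
          calc (4/π-1)^2 = (4/π-1)^2 / (1 - 2/π) * (1 - 2/π) :=
                (div_mul_cancel₀ _ hden.ne').symm
            _ ≤ x^2 * (1 - 2/π) := mul_le_mul_of_nonneg_right this hden.le
      exact hanti (Set.mem_Icc.2 ⟨hcase, hb⟩)
        (Set.mem_Icc.2 ⟨le_trans hcase hb, le_rfl⟩) hb
    exact le_of_tendsto gG_tendsto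
      ((Filter.eventually_ge_atTop w).mono key)


/-- Sharper upper Gaussian tail bound: for standard normal `z` and `w ≥ 0`,
`P(z ≥ w) ≤ 2 exp(-w²/2) / (√(2π) (w + √(w² + 8/π)))`. -/
theorem gaussian_tail_upper_sharp (w : ℝ) (hw : 0 ≤ w) :
    ∫ x in Set.Ici w, Real.exp (-x ^ 2 / 2) / Real.sqrt (2 * π) ≤
      2 * Real.exp (-w ^ 2 / 2) /
        (Real.sqrt (2 * π) * (w + Real.sqrt (w ^ 2 + 8 / π))) := by
  have hπ : 0 < π := Real.pi_pos
  set s := Real.sqrt (w^2 + 8/π) with hs_def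
  have hs : 0 < s := hs_pos w
  have hs2 : s * s = w^2 + 8/π := Real.mul_self_sqrt (by positivity)
  have hws : 0 < w + s := by linarith
  have h2π : 0 < Real.sqrt (2*π) := Real.sqrt_pos.2 (by positivity)
  -- express the set integral via gC and the interval integral
  have hIci : ∫ x in Set.Ici w, Real.exp (-x^2/2)
      = gC - ∫ t in (0:ℝ)..w, Real.exp (-t^2/2) := by
    rw [intervalIntegral.integral_of_le hw, MeasureTheory.integral_Ici_eq_integral_Ioi]
    unfold gC
    rw [← Set.Ioc_union_Ioi_eq_Ioi hw,
      MeasureTheory.setIntegral_union (Set.Ioc_disjoint_Ioi le_rfl) measurableSet_Ioi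
        gauss_integrable.integrableOn gauss_integrable.integrableOn]
    ring
  have hG := gG_nonneg w hw
  unfold gG at hG
  have hmain : ∫ x in Set.Ici w, Real.exp (-x^2/2) ≤ Real.exp (-w^2/2) * gF w := by
    rw [hIci]; linarith
  -- the right-hand side equals exp(-w²/2) * gF w / √(2π)
  have hFs : gF w * (w + s) = 2 := by
    unfold gF
    rw [← hs_def]
    have hpp : π * π⁻¹ = 1 := mul_inv_cancel₀ hπ.ne'
    field_simp
    linear_combination π * hs2 + 8 * hpp
  have hRHS : 2 * Real.exp (-w^2/2) / (Real.sqrt (2*π) * (w + s))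
      = Real.exp (-w^2/2) * gF w / Real.sqrt (2*π) := by
    rw [div_eq_div_iff (by positivity) h2π.ne']
    linear_combination (-(Real.exp (-w^2/2)) * Real.sqrt (2*π)) * hFs
  calc ∫ x in Set.Ici w, Real.exp (-x^2/2) / Real.sqrt (2*π)
      = (∫ x in Set.Ici w, Real.exp (-x^2/2)) / Real.sqrt (2*π) :=
        MeasureTheory.integral_div _ _
    _ ≤ Real.exp (-w^2/2) * gF w / Real.sqrt (2*π) := by
        gcongr
    _ = 2 * Real.exp (-w^2/2) / (Real.sqrt (2*π) * (w + s)) := hRHS.symm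
end

section
/- For a standard normal random variable z and any w ≥ 0, P(z ≥ w) ≥ √(2/π)·exp(−w²/2) / (w + √(w² + 4)). -/
open Real MeasureTheory

noncomputable def gtG (x : ℝ) : ℝ := 2 * Real.exp (-x ^ 2 / 2) / (x + Real.sqrt (x ^ 2 + 4))
noncomputable def gtG' (x : ℝ) : ℝ :=
  -(2 * Real.exp (-x ^ 2 / 2) * (x * Real.sqrt (x ^ 2 + 4) + 1) /
    ((x + Real.sqrt (x ^ 2 + 4)) * Real.sqrt (x ^ 2 + 4)))

lemma gt_s_pos (x : ℝ) : 0 < Real.sqrt (x ^ 2 + 4) := by positivity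

lemma gt_s_sq (x : ℝ) : Real.sqrt (x ^ 2 + 4) ^ 2 = x ^ 2 + 4 :=
  Real.sq_sqrt (by positivity)

lemma gt_den_pos (x : ℝ) : 0 < x + Real.sqrt (x ^ 2 + 4) := by
  have h1 : |x| < Real.sqrt (x ^ 2 + 4) := by
    rw [← Real.sqrt_sq_eq_abs]
    exact Real.sqrt_lt_sqrt (by positivity) (by linarith)
  have := neg_abs_le x
  linarith

lemma gt_hasDerivAt (x : ℝ) : HasDerivAt gtG (gtG' x) x := by
  have hs := gt_s_pos x
  have hs2 := gt_s_sq x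
  have hd := gt_den_pos x
  have h1 : HasDerivAt (fun y : ℝ => 2 * Real.exp (-y ^ 2 / 2))
      (2 * (Real.exp (-x ^ 2 / 2) * (-x))) x := by
    have : HasDerivAt (fun y : ℝ => -y ^ 2 / 2) (-x) x := by
      have := ((hasDerivAt_pow 2 x).neg).div_const 2
      refine this.congr_deriv ?_
      push_cast
      ring
    simpa using ((Real.hasDerivAt_exp _).comp x this).const_mul 2
  have h2 : HasDerivAt (fun y : ℝ => y + Real.sqrt (y ^ 2 + 4))
      (1 + x / Real.sqrt (x ^ 2 + 4)) x := by
    have hsq : HasDerivAt (fun y : ℝ => y ^ 2 + 4) (2 * x) x := by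
      simpa using (hasDerivAt_pow 2 x).add_const 4
    have := (hsq.sqrt (by positivity)).const_add 0
    have h3 : HasDerivAt (fun y : ℝ => Real.sqrt (y ^ 2 + 4))
        (2 * x / (2 * Real.sqrt (x ^ 2 + 4))) x := hsq.sqrt (by positivity)
    have := (hasDerivAt_id x).add h3
    refine this.congr_deriv ?_
    field_simp
  have := h1.div h2 (ne_of_gt hd)
  refine this.congr_deriv ?_
  unfold gtG'
  field_simp
  nlinarith [Real.exp_pos (-x ^ 2 / 2), sq_nonneg (x + Real.sqrt (x ^ 2 + 4))]

lemma gt_gauss_int : Integrable (fun x : ℝ => Real.exp (-x ^ 2 / 2)) := by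
  have h := integrable_exp_neg_mul_sq (show (0:ℝ) < 1/2 by norm_num)
  have he : (fun x : ℝ => Real.exp (-x ^ 2 / 2)) = fun x => Real.exp (-(1/2) * x ^ 2) := by
    funext x; ring_nf
  rw [he]; exact h

lemma gt_cont' : Continuous gtG' := by
  unfold gtG'
  refine Continuous.neg (Continuous.div (by fun_prop) (by fun_prop) fun x => ?_)
  exact ne_of_gt (mul_pos (gt_den_pos x) (gt_s_pos x))

lemma gt_bound {x : ℝ} (hx : 0 ≤ x) : -gtG' x ≤ Real.exp (-x ^ 2 / 2) := by
  have hs := gt_s_pos x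
  have hs2 := gt_s_sq x
  have hd := gt_den_pos x
  have he := Real.exp_pos (-x ^ 2 / 2)
  unfold gtG'
  rw [neg_neg, div_le_iff₀ (by positivity)]
  have hxs : x * Real.sqrt (x ^ 2 + 4) ≤ x ^ 2 + 2 := by
    nlinarith [mul_nonneg hx hs.le]
  nlinarith

lemma gt_nonneg' {x : ℝ} (hx : 0 ≤ x) : 0 ≤ -gtG' x := by
  have hs := gt_s_pos x
  have hd := gt_den_pos x
  have he := Real.exp_pos (-x ^ 2 / 2)
  unfold gtG'
  rw [neg_neg]
  positivity

lemma gt_tendsto : Filter.Tendsto gtG Filter.atTop (nhds 0) := by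
  have h1 : Filter.Tendsto (fun x : ℝ => Real.exp (-x ^ 2 / 2)) Filter.atTop (nhds 0) := by
    apply Real.tendsto_exp_atBot.comp
    apply Filter.Tendsto.atBot_div_const (by norm_num)
    exact Filter.tendsto_neg_atBot_iff.mpr (Filter.tendsto_pow_atTop (by norm_num))
  apply tendsto_of_tendsto_of_tendsto_of_le_of_le' tendsto_const_nhds h1
  · filter_upwards with x
    unfold gtG
    exact div_nonneg (by positivity) (gt_den_pos x).le
  · filter_upwards [Filter.eventually_ge_atTop (0:ℝ)] with x hx
    unfold gtG
    have hs : (2:ℝ) ≤ Real.sqrt (x ^ 2 + 4) := by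
      rw [show (2:ℝ) = Real.sqrt 4 by rw [show (4:ℝ) = 2^2 by norm_num, Real.sqrt_sq]; norm_num]
      exact Real.sqrt_le_sqrt (by nlinarith)
    rw [div_le_iff₀ (by nlinarith)]
    nlinarith [Real.exp_pos (-x ^ 2 / 2)]

lemma gt_intOn {w : ℝ} (hw : 0 ≤ w) : IntegrableOn gtG' (Set.Ioi w) := by
  apply Integrable.mono gt_gauss_int.integrableOn gt_cont'.aestronglyMeasurable.restrict
  rw [ae_restrict_iff' measurableSet_Ioi]
  filter_upwards with x hx
  have hx0 : (0:ℝ) ≤ x := le_of_lt (lt_of_le_of_lt hw hx)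
  rw [Real.norm_eq_abs, Real.norm_eq_abs, abs_of_pos (Real.exp_pos _), abs_le]
  have h1 := gt_bound hx0
  have h2 := gt_nonneg' hx0
  have h3 := Real.exp_pos (-x ^ 2 / 2)
  constructor <;> linarith

lemma gt_ftc {w : ℝ} (hw : 0 ≤ w) : ∫ x in Set.Ioi w, gtG' x = -gtG w :=
  (integral_Ioi_of_hasDerivAt_of_tendsto' (fun x _ => gt_hasDerivAt x)
    (gt_intOn hw) gt_tendsto).trans (zero_sub _)

/-- Gaussian tail lower bound: `P(z ≥ w) ≥ √(2/π) exp(-w²/2) / (w + √(w² + 4))` for `w ≥ 0`. -/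
theorem gaussian_tail_lower (w : ℝ) (hw : 0 ≤ w) :
    ∫ x in Set.Ici w, Real.exp (-x ^ 2 / 2) / Real.sqrt (2 * π) ≥
      Real.sqrt (2 / π) * Real.exp (-w ^ 2 / 2) / (w + Real.sqrt (w ^ 2 + 4)) := by
  have hd := gt_den_pos w
  have hpi := Real.pi_pos
  have hsq : 0 < Real.sqrt (2 * π) := Real.sqrt_pos.mpr (by positivity)
  have hmono : gtG w ≤ ∫ x in Set.Ioi w, Real.exp (-x ^ 2 / 2) := by
    have h := setIntegral_mono_on ((gt_intOn hw).neg) gt_gauss_int.integrableOn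
      measurableSet_Ioi (fun x hx => gt_bound (le_of_lt (lt_of_le_of_lt hw hx)))
    calc gtG w = ∫ x in Set.Ioi w, -gtG' x := by
          rw [integral_neg, gt_ftc hw, neg_neg]
      _ ≤ _ := h
  rw [MeasureTheory.integral_Ici_eq_integral_Ioi, integral_div]
  have hkey : Real.sqrt (2 / π) * Real.sqrt (2 * π) = 2 := by
    rw [← Real.sqrt_mul (by positivity), show 2 / π * (2 * π) = 4 by field_simp; ring,
      show (4:ℝ) = 2 ^ 2 by norm_num, Real.sqrt_sq (by norm_num)]
  have heq : Real.sqrt (2 / π) * Real.exp (-w ^ 2 / 2) / (w + Real.sqrt (w ^ 2 + 4)) =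
      gtG w / Real.sqrt (2 * π) := by
    unfold gtG
    rw [div_eq_div_iff hd.ne' hsq.ne']
    have he := Real.exp_pos (-w ^ 2 / 2)
    rw [div_mul_cancel₀ _ hd.ne']
    linear_combination Real.exp (-w ^ 2 / 2) * hkey
  rw [ge_iff_le, heq]
  gcongr
end

section
/- For every natural number t ≥ 1 and real a > 1, the standard Gaussian quantile satisfies Φ⁻¹(1 − 1/(√(2πe)·t^a)) > √((3a/2)·log t). -/
open Real MeasureTheory

section GaussianQuantileAux

open Set Filter

lemma aux_dens_integrable : Integrable (fun x : ℝ => Real.exp (-x ^ 2 / 2) / Real.sqrt (2 * π)) := by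
  have h : Integrable (fun x : ℝ => Real.exp (-(1/2) * x ^ 2)) :=
    integrable_exp_neg_mul_sq (by norm_num)
  have := h.div_const (Real.sqrt (2 * π))
  convert this using 2 with x
  ring_nf

lemma aux_dens_total : (∫ x : ℝ, Real.exp (-x ^ 2 / 2) / Real.sqrt (2 * π)) = 1 := by
  have h : (∫ x : ℝ, Real.exp (-(1/2) * x ^ 2)) = Real.sqrt (π / (1/2)) :=
    integral_gaussian (1/2)
  have h2 : (∫ x : ℝ, Real.exp (-x ^ 2 / 2)) = Real.sqrt (2 * π) := by
    rw [show (2 * π) = π / (1/2) by ring, ← h]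
    congr 1 with x
    ring_nf
  rw [MeasureTheory.integral_div, h2, div_self]
  positivity

lemma aux_hasDeriv (x : ℝ) :
    HasDerivAt (fun y : ℝ => -(Real.exp (-1/2 - 2 * y ^ 2 / 3) / Real.sqrt (2 * π)))
      (4 * x / 3 * Real.exp (-1/2 - 2 * x ^ 2 / 3) / Real.sqrt (2 * π)) x := by
  have h1 : HasDerivAt (fun y : ℝ => -1/2 - 2 * y ^ 2 / 3) (-(4 * x / 3)) x := by
    have h := ((hasDerivAt_pow 2 x).const_mul (-(2:ℝ)/3)).const_add (-1/2 : ℝ)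
    have e1 : (fun y : ℝ => -1/2 - 2 * y ^ 2 / 3) = fun y => -1/2 + -(2:ℝ)/3 * y ^ 2 := by
      funext y; ring
    have e2 : -(4 * x / 3) = -(2:ℝ)/3 * (((2:ℕ):ℝ) * x ^ 1) := by push_cast; ring
    rw [e1, e2]; exact h
  have h2 := (h1.exp.div_const (Real.sqrt (2 * π))).neg
  refine h2.congr_deriv ?_
  ring

lemma aux_integrable_g (s : ℝ) :
    IntegrableOn (fun x : ℝ => 4 * x / 3 * Real.exp (-1/2 - 2 * x ^ 2 / 3) / Real.sqrt (2 * π))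
      (Ioi s) := by
  have h : Integrable (fun x : ℝ => x * Real.exp (-(2/3) * x ^ 2)) :=
    integrable_mul_exp_neg_mul_sq (by norm_num)
  have h2 := (h.const_mul (4 / 3 * Real.exp (-1/2) / Real.sqrt (2 * π)))
  have heq : (fun x : ℝ => 4 / 3 * Real.exp (-1/2) / Real.sqrt (2 * π) * (x * Real.exp (-(2/3) * x ^ 2)))
      = fun x : ℝ => 4 * x / 3 * Real.exp (-1/2 - 2 * x ^ 2 / 3) / Real.sqrt (2 * π) := by
    funext x
    rw [show (-1/2 - 2 * x ^ 2 / 3 : ℝ) = -1/2 + (-(2/3) * x ^ 2) by ring, Real.exp_add]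
    ring
  rw [← heq]
  exact h2.integrableOn

lemma aux_ftc (s : ℝ) :
    (∫ x in Ioi s, 4 * x / 3 * Real.exp (-1/2 - 2 * x ^ 2 / 3) / Real.sqrt (2 * π))
      = Real.exp (-1/2 - 2 * s ^ 2 / 3) / Real.sqrt (2 * π) := by
  have htend : Tendsto (fun y : ℝ => -(Real.exp (-1/2 - 2 * y ^ 2 / 3) / Real.sqrt (2 * π)))
      atTop (nhds 0) := by
    have h1 : Tendsto (fun y : ℝ => -1/2 - 2 * y ^ 2 / 3) atTop atBot := by
      apply tendsto_atBot_add_const_left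
      apply tendsto_neg_atTop_atBot.comp
      apply Tendsto.atTop_div_const (by norm_num)
      exact (tendsto_pow_atTop (by norm_num)).const_mul_atTop (by norm_num)
    have h2 := (Real.tendsto_exp_atBot.comp h1).div_const (Real.sqrt (2 * π))
    simpa using h2.neg
  have := integral_Ioi_of_hasDerivAt_of_tendsto' (fun x _ => aux_hasDeriv x)
    (aux_integrable_g s) htend
  rw [this]
  ring

lemma aux_pointwise (x : ℝ) :
    4 * x / 3 * Real.exp (-1/2 - 2 * x ^ 2 / 3) / Real.sqrt (2 * π)
      < Real.exp (-x ^ 2 / 2) / Real.sqrt (2 * π) := by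
  have hs : (0:ℝ) < Real.sqrt (2 * π) := by positivity
  rw [div_lt_div_iff_of_pos_right hs]
  have hsplit : Real.exp (-x ^ 2 / 2)
      = Real.exp (-1/2 - 2 * x ^ 2 / 3) * Real.exp (x ^ 2 / 6 + 1/2) := by
    rw [← Real.exp_add]; ring_nf
  rw [hsplit]
  have hE : (0:ℝ) < Real.exp (-1/2 - 2 * x ^ 2 / 3) := Real.exp_pos _
  rw [show (4 * x / 3 * Real.exp (-1/2 - 2 * x ^ 2 / 3) : ℝ)
      = Real.exp (-1/2 - 2 * x ^ 2 / 3) * (4 * x / 3) by ring]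
  apply mul_lt_mul_of_pos_left _ hE
  have hy : (0:ℝ) ≤ x ^ 2 / 6 + 1/2 := by positivity
  have hq := Real.quadratic_le_exp_of_nonneg hy
  have hlt : 4 * x / 3 < 1 + (x ^ 2 / 6 + 1/2) + (x ^ 2 / 6 + 1/2) ^ 2 / 2 := by
    nlinarith [sq_nonneg (x - 2), sq_nonneg (x ^ 2 - 4 * x), sq_nonneg (x ^ 2 - 3),
      sq_nonneg x, sq_nonneg (x - 1.9), sq_nonneg (x ^ 2 - 3.61)]
  linarith

lemma aux_setIntegral_pos {f : ℝ → ℝ} (hf : ∀ x, 0 < f x) {S : Set ℝ}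
    (hfi : IntegrableOn f S) (hS : 0 < volume S) : 0 < ∫ x in S, f x := by
  rw [setIntegral_pos_iff_support_of_nonneg_ae
    (Filter.Eventually.of_forall fun x => (hf x).le) hfi]
  have : Function.support f = univ := by
    ext x; simp [Function.support, (hf x).ne']
  rw [this, univ_inter]
  exact hS

lemma aux_tail (s : ℝ) :
    Real.exp (-1/2 - 2 * s ^ 2 / 3) / Real.sqrt (2 * π)
      < ∫ x in Ioi s, Real.exp (-x ^ 2 / 2) / Real.sqrt (2 * π) := by
  have hint : IntegrableOn (fun x : ℝ => Real.exp (-x ^ 2 / 2) / Real.sqrt (2 * π)) (Ioi s) :=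
    aux_dens_integrable.integrableOn
  have hpos : 0 < ∫ x in Ioi s, (Real.exp (-x ^ 2 / 2) / Real.sqrt (2 * π)
      - 4 * x / 3 * Real.exp (-1/2 - 2 * x ^ 2 / 3) / Real.sqrt (2 * π)) := by
    apply aux_setIntegral_pos (fun x => sub_pos.mpr (aux_pointwise x))
      (hint.sub (aux_integrable_g s))
    simp [Real.volume_Ioi]
  rw [MeasureTheory.integral_sub hint (aux_integrable_g s), aux_ftc s] at hpos
  linarith

end GaussianQuantileAux

/-- Third quantile inequality: for `t ≥ 1` natural and `a > 1`,
`Φ⁻¹(1 - 1/(√(2πe) t^a)) > √((3a/2) log t)`. -/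
theorem gaussian_quantile_log_bound
    (Φ Φinv : ℝ → ℝ)
    (hΦ : ∀ w, Φ w = ∫ x in Set.Iic w, Real.exp (-x ^ 2 / 2) / Real.sqrt (2 * π))
    (hinv : ∀ p ∈ Set.Ioo (0 : ℝ) 1, Φ (Φinv p) = p)
    (t : ℕ) (ht : 1 ≤ t) (a : ℝ) (ha : 1 < a) :
    Φinv (1 - 1 / (Real.sqrt (2 * π * Real.exp 1) * (t : ℝ) ^ a)) >
      Real.sqrt ((3 * a / 2) * Real.log t) := by
  set s : ℝ := Real.sqrt ((3 * a / 2) * Real.log t) with hs_def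
  set α : ℝ := 1 / (Real.sqrt (2 * π * Real.exp 1) * (t : ℝ) ^ a) with hα_def
  have ht1 : (1:ℝ) ≤ (t:ℝ) := by exact_mod_cast ht
  have ht0 : (0:ℝ) < (t:ℝ) := lt_of_lt_of_le one_pos ht1
  have hlog : 0 ≤ Real.log t := Real.log_nonneg ht1
  have harg : 0 ≤ (3 * a / 2) * Real.log t := by
    apply mul_nonneg _ hlog; linarith
  have hs2 : s ^ 2 = (3 * a / 2) * Real.log t := Real.sq_sqrt harg
  -- Φ is strictly monotone
  have hmono : StrictMono Φ := by
    intro w1 w2 hw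
    have hI1 : IntegrableOn (fun x : ℝ => Real.exp (-x ^ 2 / 2) / Real.sqrt (2 * π)) (Set.Iic w1) :=
      aux_dens_integrable.integrableOn
    have hI2 : IntegrableOn (fun x : ℝ => Real.exp (-x ^ 2 / 2) / Real.sqrt (2 * π)) (Set.Iic w2) :=
      aux_dens_integrable.integrableOn
    have hdiff := intervalIntegral.integral_Iic_sub_Iic hI1 hI2
    rw [intervalIntegral.integral_of_le hw.le] at hdiff
    have hpos : 0 < ∫ x in Set.Ioc w1 w2, Real.exp (-x ^ 2 / 2) / Real.sqrt (2 * π) := by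
      apply aux_setIntegral_pos (fun x => by positivity) aux_dens_integrable.integrableOn
      rw [Real.volume_Ioc]
      exact ENNReal.ofReal_pos.mpr (by linarith)
    rw [hΦ w1, hΦ w2]
    linarith
  -- Φ w + tail = 1
  have hsum : ∀ w : ℝ, Φ w + (∫ x in Set.Ioi w, Real.exp (-x ^ 2 / 2) / Real.sqrt (2 * π)) = 1 := by
    intro w
    rw [hΦ w, intervalIntegral.integral_Iic_add_Ioi aux_dens_integrable.integrableOn
      aux_dens_integrable.integrableOn, aux_dens_total]
  -- α equals the tail-bound expression at s
  have hα_eq : α = Real.exp (-1/2 - 2 * s ^ 2 / 3) / Real.sqrt (2 * π) := by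
    have h1 : Real.sqrt (2 * π * Real.exp 1) = Real.sqrt (2 * π) * Real.exp (1/2) := by
      rw [Real.sqrt_mul (by positivity)]
      congr 1
      rw [show Real.exp 1 = (Real.exp (1/2)) ^ 2 by rw [sq, ← Real.exp_add]; norm_num]
      exact Real.sqrt_sq (Real.exp_nonneg _)
    have h2 : (t:ℝ) ^ a = Real.exp (Real.log t * a) := Real.rpow_def_of_pos ht0 a
    have h3 : -1/2 - 2 * s ^ 2 / 3 = -(1/2 + Real.log t * a) := by
      rw [hs2]; ring
    rw [hα_def, h1, h2, h3, Real.exp_neg, Real.exp_add]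
    have hsq : (0:ℝ) < Real.sqrt (2 * π) := by positivity
    field_simp
  -- main chain
  have htail := aux_tail s
  rw [← hα_eq] at htail
  have hΦs : Φ s < 1 - α := by
    have := hsum s
    linarith
  have hΦs_pos : 0 < Φ s := by
    rw [hΦ s]
    apply aux_setIntegral_pos (fun x => by positivity) aux_dens_integrable.integrableOn
    simp [Real.volume_Iic]
  have hα_pos : 0 < α := by
    rw [hα_def]
    have : (0:ℝ) < (t:ℝ) ^ a := Real.rpow_pos_of_pos ht0 a
    have h2πe : (0:ℝ) < 2 * π * Real.exp 1 := by positivity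
    positivity
  have hmem : (1 - α) ∈ Set.Ioo (0:ℝ) 1 := ⟨by linarith, by linarith⟩
  have hval := hinv (1 - α) hmem
  have : Φ s < Φ (Φinv (1 - α)) := by rw [hval]; exact hΦs
  exact hmono.lt_iff_lt.mp this
end

section
/- Posterior variance sandwich in correlated inference: under the inference Λ(t) = Λ₀ + P(t)⁻¹ with Σ(t) = Λ(t)⁻¹, where Λ₀ = Σ₀⁻¹ is positive definite and P(t)⁻¹ is the diagonal matrix with entries n_i(t)/σ_s², the i-th diagonal entry of Σ(t) satisfies σ_i²(t) ≥ σ_s²/(δ_{i-cond}² + n_i(t)), where δ_{i-cond}² = σ_s²/σ_{i-cond}² and σ_{i-cond}² = σ_i²(0) − σ_i(0)Σ_{∼i}(0)⁻¹σ_i(0)ᵀ is the conditional variance of arm i given all other arms. -/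
open Matrix

lemma pv_diag_pos {m : Type*} [Fintype m] [DecidableEq m]
    {A : Matrix m m ℝ} (hA : A.PosDef) (i : m) : 0 < A i i := by
  have := hA.dotProduct_mulVec_pos (x := Pi.single i 1) (by simp [Function.ne_iff])
  simpa [Matrix.mulVec_single, Pi.single_apply, dotProduct] using this

lemma pv_inv_diag_ge {m : Type*} [Fintype m] [DecidableEq m]
    {A : Matrix m m ℝ} (hA : A.PosDef) (i : m) : 1 / A i i ≤ A⁻¹ i i := by
  have hsymm : ∀ j k, A j k = A k j := fun j k => by
    have := congrFun (congrFun hA.isHermitian.eq j) k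
    simpa using this.symm
  have hAinv : A * A⁻¹ = 1 := Matrix.mul_nonsing_inv A hA.det_pos.ne'.isUnit
  set e : m → ℝ := Pi.single i 1 with he
  set w : m → ℝ := A⁻¹ *ᵥ e with hw
  have hβpos : 0 < A⁻¹ i i := pv_diag_pos hA.inv i
  have hβ : w i = A⁻¹ i i := by simp [hw, he, Matrix.mulVec_single]
  have hAw : A *ᵥ w = e := by
    rw [hw, Matrix.mulVec_mulVec, hAinv, Matrix.one_mulVec]
  set c : ℝ := (A⁻¹ i i)⁻¹ with hc
  set z : m → ℝ := e - c • w with hz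
  have hq : 0 ≤ z ⬝ᵥ (A *ᵥ z) := by
    have := hA.posSemidef.dotProduct_mulVec_nonneg z
    simpa using this
  have hzi : z i = 0 := by
    have hcw : c * w i = 1 := by rw [hβ, hc, inv_mul_cancel₀ hβpos.ne']
    simp [hz, he, Pi.sub_apply, hcw]
  have hT : w ⬝ᵥ (A *ᵥ e) = 1 := by
    have h1 : A *ᵥ e = fun j => A j i := by
      funext j; simp [he, Matrix.mulVec_single]
    have h2 : w ⬝ᵥ (fun j => A j i) = (A *ᵥ w) i := by
      simp [dotProduct, Matrix.mulVec, dotProduct]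
      exact Finset.sum_congr rfl fun j _ => by rw [hsymm j i]; ring
    rw [h1, h2, hAw, he]; simp
  have heAe : e ⬝ᵥ (A *ᵥ e) = A i i := by
    simp [he, Matrix.mulVec_single, single_dotProduct]
  have hze : z ⬝ᵥ e = 0 := by
    simp [he, dotProduct_single, hzi]
  have hq2 : z ⬝ᵥ (A *ᵥ z) = A i i - c := by
    rw [hz, Matrix.mulVec_sub, Matrix.mulVec_smul, hAw]
    rw [dotProduct_sub, sub_dotProduct, sub_dotProduct]
    rw [smul_dotProduct, smul_dotProduct, dotProduct_smul]
    rw [heAe, hT]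
    have : e ⬝ᵥ e = 1 := by simp [he, single_dotProduct]
    rw [this]
    have hwe : w ⬝ᵥ e = A⁻¹ i i := by simp [he, dotProduct_single, hβ]
    rw [dotProduct_smul, hwe, hc]
    field_simp
    simp only [smul_eq_mul, mul_one]
    field_simp
    ring
  rw [hq2] at hq
  have hApos : 0 < A i i := pv_diag_pos hA i
  rw [div_le_iff₀ hApos]
  have h3 : (A⁻¹ i i)⁻¹ ≤ A i i := by linarith
  calc (1:ℝ) = A⁻¹ i i * (A⁻¹ i i)⁻¹ := by rw [mul_inv_cancel₀ hβpos.ne']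
    _ ≤ A⁻¹ i i * A i i := by nlinarith

lemma pv_sum_split {N : ℕ} (i : Fin N) (f : Fin N → ℝ) :
    ∑ k, f k = f i + ∑ a : {j : Fin N // j ≠ i}, f a.1 := by
  rw [← Finset.sum_subtype (Finset.univ.erase i) (fun x => by simp) f]
  rw [Finset.add_sum_erase _ f (Finset.mem_univ i)]

lemma pv_sub_posDef {N : ℕ} (S₀ : Matrix (Fin N) (Fin N) ℝ) (hS₀ : S₀.PosDef) (i : Fin N) :
    (Matrix.of fun (a b : {j : Fin N // j ≠ i}) => S₀ a.1 b.1).PosDef := by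
  have hsymm : ∀ j k, S₀ j k = S₀ k j := fun j k => by
    have := congrFun (congrFun hS₀.isHermitian.eq j) k
    simpa using this.symm
  refine Matrix.PosDef.of_dotProduct_mulVec_pos ?_ ?_
  · ext a b
    simp [Matrix.conjTranspose_apply, hsymm a.1 b.1]
  · intro x hx
    set xt : Fin N → ℝ := fun k => if h : k ≠ i then x ⟨k, h⟩ else 0 with hxt
    have hxt0 : xt ≠ 0 := by
      rw [Function.ne_iff] at hx ⊢
      obtain ⟨a, ha⟩ := hx
      exact ⟨a.1, by simpa [hxt, a.2] using ha⟩
    have hxti : xt i = 0 := by simp [hxt]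
    have hxta : ∀ a : {j : Fin N // j ≠ i}, xt a.1 = x a := fun a => by simp [hxt, a.2]
    have key : star x ⬝ᵥ (Matrix.of fun (a b : {j : Fin N // j ≠ i}) => S₀ a.1 b.1) *ᵥ x
        = star xt ⬝ᵥ S₀ *ᵥ xt := by
      simp only [star_trivial, dotProduct, Matrix.mulVec, Matrix.of_apply]
      rw [pv_sum_split i (fun j => xt j * ∑ k, S₀ j k * xt k)]
      rw [hxti, zero_mul, zero_add]
      refine Finset.sum_congr rfl fun a _ => ?_
      rw [pv_sum_split i (fun k => S₀ a.1 k * xt k), hxti, mul_zero, zero_add, hxta]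
      congr 1
      exact Finset.sum_congr rfl fun b _ => by rw [hxta]
    rw [key]
    exact hS₀.dotProduct_mulVec_pos hxt0

lemma pv_inv_diag_eq {N : ℕ} (S₀ : Matrix (Fin N) (Fin N) ℝ) (hS₀ : S₀.PosDef) (i : Fin N) :
    S₀⁻¹ i i * (S₀ i i -
      (fun a : {j : Fin N // j ≠ i} => S₀ i a.1) ⬝ᵥ
        (Matrix.of fun (a b : {j : Fin N // j ≠ i}) => S₀ a.1 b.1)⁻¹.mulVec
          (fun a => S₀ i a.1)) = 1 := by
  set Ssub := Matrix.of fun (a b : {j : Fin N // j ≠ i}) => S₀ a.1 b.1 with hSsub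
  set svec : {j : Fin N // j ≠ i} → ℝ := fun a => S₀ i a.1 with hsvec
  have hsymm : ∀ j k, S₀ j k = S₀ k j := fun j k => by
    have := congrFun (congrFun hS₀.isHermitian.eq j) k
    simpa using this.symm
  have hsub : Ssub.PosDef := pv_sub_posDef S₀ hS₀ i
  have hinv : S₀ * S₀⁻¹ = 1 := Matrix.mul_nonsing_inv S₀ hS₀.det_pos.ne'.isUnit
  set y : Fin N → ℝ := fun k => S₀⁻¹ k i with hy
  have hrow : ∀ j, ∑ k, S₀ j k * y k = if j = i then 1 else 0 := fun j => by
    have := congrFun (congrFun hinv j) i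
    simpa [Matrix.mul_apply, Matrix.one_apply, hy] using this
  set u : {j : Fin N // j ≠ i} → ℝ := fun a => y a.1 with hu
  have h1 : Ssub *ᵥ u = (-(y i)) • svec := by
    funext a
    have h := hrow a.1
    rw [if_neg a.2, pv_sum_split i (fun k => S₀ a.1 k * y k)] at h
    have : ∑ b : {j : Fin N // j ≠ i}, S₀ a.1 b.1 * y b.1 = -(S₀ a.1 i * y i) := by
      linarith
    simp only [Matrix.mulVec, dotProduct, hSsub, Matrix.of_apply, hu]
    rw [this]
    simp [hsvec, Pi.smul_apply, smul_eq_mul, hsymm a.1 i]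
    ring
  have hu_eq : u = (-(y i)) • (Ssub⁻¹ *ᵥ svec) := by
    have hSsubinv : Ssub⁻¹ * Ssub = 1 := Matrix.nonsing_inv_mul Ssub hsub.det_pos.ne'.isUnit
    calc u = Ssub⁻¹ *ᵥ (Ssub *ᵥ u) := by
            rw [Matrix.mulVec_mulVec, hSsubinv, Matrix.one_mulVec]
      _ = (-(y i)) • (Ssub⁻¹ *ᵥ svec) := by rw [h1, Matrix.mulVec_smul]
  have hrowi := hrow i
  rw [if_pos rfl, pv_sum_split i (fun k => S₀ i k * y k)] at hrowi
  have h2 : ∑ a : {j : Fin N // j ≠ i}, S₀ i a.1 * y a.1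
      = -(y i) * (svec ⬝ᵥ Ssub⁻¹ *ᵥ svec) := by
    have : ∑ a : {j : Fin N // j ≠ i}, S₀ i a.1 * y a.1 = svec ⬝ᵥ u := by
      simp [dotProduct, hsvec, hu]
    rw [this, hu_eq, dotProduct_smul, smul_eq_mul]
  rw [h2] at hrowi
  have : y i = S₀⁻¹ i i := rfl
  nlinarith [hrowi]

/-- Posterior variance lower bound in correlated inference: with `Λ₀ = Σ₀⁻¹` positive
definite and `P⁻¹ = diag(n_j/σ_s²)`, the `i`-th diagonal entry of `Σ(t) = (Λ₀ + P⁻¹)⁻¹`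
satisfies `σ_i²(t) ≥ σ_s²/(δ_{i-cond}² + n_i)`, where `δ_{i-cond}² = σ_s²/σ_{i-cond}²`
and `σ_{i-cond}²` is the Schur complement (conditional variance of arm `i` given the rest). -/
theorem posterior_variance_lower_bound
    {N : ℕ} (S₀ : Matrix (Fin N) (Fin N) ℝ) (hS₀ : S₀.PosDef)
    (σs : ℝ) (hσs : 0 < σs) (n : Fin N → ℕ) (i : Fin N) :
    let Ssub : Matrix {j : Fin N // j ≠ i} {j : Fin N // j ≠ i} ℝ :=
      Matrix.of fun a b => S₀ a.1 b.1
    let svec : {j : Fin N // j ≠ i} → ℝ := fun a => S₀ i a.1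
    let σcond2 : ℝ := S₀ i i - svec ⬝ᵥ Ssub⁻¹.mulVec svec
    ((S₀⁻¹ + Matrix.diagonal (fun j => (n j : ℝ) / σs ^ 2))⁻¹) i i ≥
      σs ^ 2 / (σs ^ 2 / σcond2 + n i) := by
  intro Ssub svec σcond2
  have hβpos : 0 < S₀⁻¹ i i := pv_diag_pos hS₀.inv i
  have hkey : S₀⁻¹ i i * σcond2 = 1 := pv_inv_diag_eq S₀ hS₀ i
  set β := S₀⁻¹ i i with hβ
  have hσc : σcond2 = β⁻¹ := eq_inv_of_mul_eq_one_left (by rw [mul_comm]; exact hkey)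
  set Λ := S₀⁻¹ + Matrix.diagonal (fun j => (n j : ℝ) / σs ^ 2) with hΛ
  have hΛpd : Λ.PosDef :=
    hS₀.inv.add_posSemidef (Matrix.posSemidef_diagonal_iff.mpr fun j => by positivity)
  have hΛii : Λ i i = β + n i / σs ^ 2 := by
    simp [hΛ, Matrix.add_apply, Matrix.diagonal_apply_eq, hβ]
  rw [ge_iff_le]
  calc σs ^ 2 / (σs ^ 2 / σcond2 + n i) = 1 / Λ i i := by
        rw [hΛii, hσc]
        rw [div_eq_div_iff (by positivity) (by positivity)]
        field_simp
    _ ≤ Λ⁻¹ i i := pv_inv_diag_ge hΛpd i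
end

section
/- Upper bound on estimator covariance diagonal: let Σ(t) be symmetric positive semidefinite with diagonal entries σ_i²(t) > 0, let P(t)⁻¹ be diagonal with entries n_j(t)/σ_s² where each σ_j²(t) ≤ σ_s²/(n_j(t) + ν) for some ν > 0, and let Σ̄(t) = Σ(t)P(t)⁻¹Σ(t). Then the i-th diagonal entry of Σ̄(t) satisfies σ̄_i²(t) ≤ σ_i²(t)·Σ_{j=1}^N ρ_{ij}²(t), where ρ_{ij}(t) = σ_{ij}(t)/(σ_i(t)σ_j(t)). -/
open Matrix

/-- Upper bound on estimator covariance diagonal (Lemma 4(ii), upper bound): with `S` PSD,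
positive diagonal, `S j j ≤ σ_s²/(n j + ν)`, and `S̄ = S P⁻¹ S` with `P⁻¹ = diag(n_j/σ_s²)`,
the diagonal satisfies `S̄ i i ≤ S i i · Σ_j ρ_{ij}²` where `ρ_{ij} = S i j/(√(S i i)√(S j j))`. -/
theorem estimator_covariance_upper_bound
    {N : ℕ} (S : Matrix (Fin N) (Fin N) ℝ) (hS : S.PosSemidef)
    (hdiag : ∀ i, 0 < S i i)
    (σs ν : ℝ) (hσs : 0 < σs) (hν : 0 < ν)
    (n : Fin N → ℕ) (hvar : ∀ j, S j j ≤ σs ^ 2 / ((n j : ℝ) + ν)) (i : Fin N) :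
    (S * Matrix.diagonal (fun j => (n j : ℝ) / σs ^ 2) * S) i i ≤
      S i i * ∑ j, (S i j / (Real.sqrt (S i i) * Real.sqrt (S j j))) ^ 2 := by
  have hsym : ∀ a b, S a b = S b a := fun a b => by
    have := hS.1
    rw [Matrix.IsHermitian] at this
    conv_rhs => rw [← this]
    simp [Matrix.conjTranspose_apply]
  rw [Matrix.mul_apply, Finset.mul_sum]
  apply Finset.sum_le_sum
  intro j _
  rw [Matrix.mul_diagonal]
  have hjj := hdiag j
  have hii := hdiag i
  have hsq : (S i j / (Real.sqrt (S i i) * Real.sqrt (S j j))) ^ 2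
      = S i j ^ 2 / (S i i * S j j) := by
    rw [div_pow, mul_pow, Real.sq_sqrt hii.le, Real.sq_sqrt hjj.le]
  rw [hsq, hsym j i]
  have hrhs : S i i * (S i j ^ 2 / (S i i * S j j)) = S i j ^ 2 / S j j := by
    field_simp
  rw [hrhs]
  -- key: n j / σs^2 ≤ 1 / S j j
  have hkey : (n j : ℝ) * S j j ≤ σs ^ 2 := by
    have h1 : (n j : ℝ) * S j j ≤ (n j : ℝ) * (σs ^ 2 / ((n j : ℝ) + ν)) :=
      mul_le_mul_of_nonneg_left (hvar j) (Nat.cast_nonneg _)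
    refine h1.trans ?_
    have hpos : (0:ℝ) < (n j : ℝ) + ν := by positivity
    calc (n j : ℝ) * (σs ^ 2 / ((n j : ℝ) + ν))
        ≤ ((n j : ℝ) + ν) * (σs ^ 2 / ((n j : ℝ) + ν)) := by
          apply mul_le_mul_of_nonneg_right (by linarith) (by positivity)
      _ = σs ^ 2 := by field_simp
  have : S i j * ((n j : ℝ) / σs ^ 2) * S i j = S i j ^ 2 * ((n j : ℝ) / σs ^ 2) := by ring
  rw [this]
  calc S i j ^ 2 * ((n j : ℝ) / σs ^ 2) ≤ S i j ^ 2 * (1 / S j j) := by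
        apply mul_le_mul_of_nonneg_left _ (sq_nonneg _)
        rw [div_le_div_iff₀ (by positivity) hjj]
        linarith
    _ = S i j ^ 2 / S j j := by ring
end
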